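/- The total coalescence rate λ_n = Σ_{k=2}^{n} C(n,k) λ_{n,k} is nondecreasing in n, i.e., λ_n ≤ λ_{n+1} for every n ≥ 2. -/

import Mathlib

open MeasureTheory

/-- The coalescence rate `λ_{b,k} = ∫_{[0,1]} x^{k-2}(1-x)^{b-k} Λ(dx)`. -/
noncomputable def coalRate (Λ : Measure ℝ) (b k : ℕ) : ℝ :=
  ∫ x in Set.Icc (0:ℝ) 1, x ^ (k - 2) * (1 - x) ^ (b - k) ∂Λ

/-- The total coalescence rate `λ_n = Σ_{k=2}^n C(n,k) λ_{n,k}`. -/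
noncomputable def totalRate (Λ : Measure ℝ) (n : ℕ) : ℝ :=
  ∑ k ∈ Finset.Icc 2 n, (n.choose k : ℝ) * coalRate Λ n k

lemma key_range (m : ℕ) (x : ℝ) :
    ∑ j ∈ Finset.range (m+2), ((m+3).choose (j+2) : ℝ) * (x ^ j * (1-x) ^ (m+1-j))
    = (∑ j ∈ Finset.range (m+1), ((m+2).choose (j+2) : ℝ) * (x ^ j * (1-x) ^ (m-j)))
      + (m+2) * (1-x) ^ (m+1) := by
  have hsplit : ∀ j ∈ Finset.range (m+2),
      ((m+3).choose (j+2) : ℝ) * (x ^ j * (1-x) ^ (m+1-j))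
      = ((m+2).choose (j+1) : ℝ) * (x ^ j * (1-x) ^ (m+1-j))
        + ((m+2).choose (j+2) : ℝ) * (x ^ j * (1-x) ^ (m+1-j)) := by
    intro j _
    have h : (m+3).choose (j+2) = (m+2).choose (j+1) + (m+2).choose (j+2) :=
      Nat.choose_succ_succ (m+2) (j+1)
    rw [h]; push_cast; ring
  rw [Finset.sum_congr rfl hsplit, Finset.sum_add_distrib]
  -- B sum: peel off j = 0
  rw [Finset.sum_range_succ' (fun j => ((m+2).choose (j+1) : ℝ) * (x ^ j * (1-x) ^ (m+1-j))) (m+1)]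
  -- A sum: peel off j = m+1 (its binomial coefficient is zero)
  rw [Finset.sum_range_succ (fun j => ((m+2).choose (j+2) : ℝ) * (x ^ j * (1-x) ^ (m+1-j))) (m+1)]
  have hz : ((m+2).choose (m+1+2) : ℝ) = 0 := by
    rw [Nat.choose_eq_zero_of_lt (by omega)]; simp
  rw [hz]
  simp only [Nat.choose_one_right, pow_zero, Nat.add_sub_cancel_left, Nat.succ_sub_succ]
  have hcomb : ∀ j ∈ Finset.range (m+1),
      ((m+2).choose (j+1+1) : ℝ) * (x ^ (j+1) * (1-x) ^ (m-j))
        + ((m+2).choose (j+2) : ℝ) * (x ^ j * (1-x) ^ (m+1-j))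
      = ((m+2).choose (j+2) : ℝ) * (x ^ j * (1-x) ^ (m-j)) := by
    intro j hj
    have hj' : j ≤ m := by simpa [Nat.lt_succ_iff] using hj
    have hpow : (1-x) ^ (m+1-j) = (1-x) ^ (m-j) * (1-x) := by
      rw [← pow_succ]
      congr 1
      omega
    rw [hpow]
    have : j + 1 + 1 = j + 2 := by omega
    rw [this]
    ring
  have hs : ∑ j ∈ Finset.range (m+1), ((m+2).choose (j+2) : ℝ) * (x ^ j * (1-x) ^ (m-j))
      = (∑ j ∈ Finset.range (m+1), ((m+2).choose (j+1+1) : ℝ) * (x ^ (j+1) * (1-x) ^ (m-j)))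
        + ∑ j ∈ Finset.range (m+1), ((m+2).choose (j+2) : ℝ) * (x ^ j * (1-x) ^ (m+1-j)) := by
    rw [← Finset.sum_add_distrib]
    exact (Finset.sum_congr rfl hcomb).symm
  rw [hs]
  simp only [zero_mul, add_zero, one_mul, Nat.sub_zero, Nat.choose_one_right, zero_add]
  push_cast
  ring

lemma pointwise_step (n : ℕ) (hn : 2 ≤ n) (x : ℝ) :
    ∑ k ∈ Finset.Icc 2 (n+1), ((n+1).choose k : ℝ) * (x ^ (k-2) * (1-x) ^ (n+1-k))
    = (∑ k ∈ Finset.Icc 2 n, (n.choose k : ℝ) * (x ^ (k-2) * (1-x) ^ (n-k)))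
      + n * (1-x) ^ (n-1) := by
  obtain ⟨m, rfl⟩ : ∃ m, n = m + 2 := ⟨n - 2, by omega⟩
  rw [← Finset.Ico_add_one_right_eq_Icc, Finset.sum_Ico_eq_sum_range,
    ← Finset.Ico_add_one_right_eq_Icc, Finset.sum_Ico_eq_sum_range]
  have h1 : m + 2 + 1 + 1 - 2 = m + 2 := by omega
  have h2 : m + 2 + 1 - 2 = m + 1 := by omega
  rw [h1, h2]
  have e4 : ∀ i, 2 + i = i + 2 := fun i => by omega
  have e1 : ∀ i, i + 2 - 2 = i := fun i => by omega
  have e2 : ∀ i, m + 3 - (i + 2) = m + 1 - i := fun i => by omega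
  have e3 : ∀ i, m + 2 - (i + 2) = m - i := fun i => by omega
  have e5 : m + 2 - 1 = m + 1 := by omega
  simp only [e4, e1, e2, e3, e5]
  have := key_range m x
  rw [show m + 2 + 1 = m + 3 from rfl]
  rw [this]
  push_cast
  ring

lemma integrable_term (Λ : Measure ℝ) [IsFiniteMeasure Λ] (a b : ℕ) :
    IntegrableOn (fun x : ℝ => x ^ a * (1-x) ^ b) (Set.Icc 0 1) Λ := by
  apply Continuous.integrableOn_Icc
  fun_prop

lemma totalRate_eq (Λ : Measure ℝ) [IsFiniteMeasure Λ] (n : ℕ) :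
    totalRate Λ n
    = ∫ x in Set.Icc (0:ℝ) 1,
        (∑ k ∈ Finset.Icc 2 n, (n.choose k : ℝ) * (x ^ (k-2) * (1-x) ^ (n-k))) ∂Λ := by
  rw [totalRate]
  rw [MeasureTheory.integral_finset_sum]
  · apply Finset.sum_congr rfl
    intro k _
    rw [coalRate, ← MeasureTheory.integral_const_mul]
  · intro k _
    exact (integrable_term Λ (k-2) (n-k)).const_mul _

/-- The total coalescence rate is nondecreasing: `λ_n ≤ λ_{n+1}` for all `n ≥ 2`. -/
theorem totalRate_mono (Λ : Measure ℝ) [IsFiniteMeasure Λ] (n : ℕ) (hn : 2 ≤ n) :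
    totalRate Λ n ≤ totalRate Λ (n + 1) := by
  rw [totalRate_eq, totalRate_eq]
  apply MeasureTheory.setIntegral_mono_on
  · exact MeasureTheory.integrable_finset_sum _ fun k _ =>
      (integrable_term Λ (k-2) (n-k)).const_mul _
  · exact MeasureTheory.integrable_finset_sum _ fun k _ =>
      (integrable_term Λ (k-2) (n+1-k)).const_mul _
  · exact measurableSet_Icc
  · intro x hx
    rw [pointwise_step n hn x]
    have h1 : (0:ℝ) ≤ (1 - x) ^ (n-1) := by
      apply pow_nonneg
      have := hx.2
      linarith
    have h2 : (0:ℝ) ≤ (n:ℝ) := by positivity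
    nlinarith
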